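/- Let U⁻ and U⁺ be c×c real matrices both solving the quadratic matrix equation U² - U(λI - D̃) + λ(B - D̃) = 0, and suppose U⁺ - U⁻ is invertible. Then the function F(x) = v(U⁺ - U⁻)⁻¹(e^{U⁺x} - e^{U⁻x}) + w(I - e^{U⁻x}), for row vectors v, w with w·λ(B - D̃) = α and v = F'(0) + wU⁻ appropriately chosen, satisfies F''(x) - F'(x)(λI - D̃) + λF(x)(B - D̃) = α for all x, and F(0) = 0. -/

import Mathlib

open Matrix

attribute [local instance] Matrix.linftyOpSemiNormedRing Matrix.linftyOpNormedRing
  Matrix.linftyOpNormedAlgebra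

lemma vecMul_smul_mat {c : ℕ} (u : Fin c → ℝ) (a : ℝ) (A : Matrix (Fin c) (Fin c) ℝ) :
    u ᵥ* (a • A) = a • (u ᵥ* A) := by
  ext i
  simp [Matrix.vecMul, dotProduct, Finset.mul_sum, mul_left_comm]

/-- the continuous linear map `A ↦ u ᵥ* (C * A)` -/
noncomputable def vmL {c : ℕ} (u : Fin c → ℝ) (C : Matrix (Fin c) (Fin c) ℝ) :
    Matrix (Fin c) (Fin c) ℝ →L[ℝ] (Fin c → ℝ) :=
  LinearMap.toContinuousLinearMap
  { toFun := fun A => u ᵥ* (C * A)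
    map_add' := fun A B => by
      show u ᵥ* (C * (A + B)) = u ᵥ* (C * A) + u ᵥ* (C * B)
      rw [mul_add, Matrix.vecMul_add]
    map_smul' := fun a A => by
      show u ᵥ* (C * (a • A)) = a • (u ᵥ* (C * A))
      rw [mul_smul_comm, vecMul_smul_mat] }

@[simp] lemma vmL_apply {c : ℕ} (u : Fin c → ℝ) (C A : Matrix (Fin c) (Fin c) ℝ) :
    vmL u C A = u ᵥ* (C * A) := rfl

lemma expDeriv {n : ℕ} (U : Matrix (Fin n) (Fin n) ℝ) (x : ℝ) :
    HasDerivAt (fun t : ℝ => NormedSpace.exp (t • U))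
      (NormedSpace.exp (x • U) * U) x := by
  exact hasDerivAt_exp_smul_const U x

/-- if U⁻, U⁺ both solve U² - U(λI - D̃) + λ(B - D̃) = 0 with U⁺ - U⁻
invertible, and wλ(B - D̃) = α, then
F(x) = v(U⁺-U⁻)⁻¹(e^{U⁺x} - e^{U⁻x}) + w(I - e^{U⁻x}) satisfies
F'' - F'(λI - D̃) + λF(B - D̃) = α and F(0) = 0. -/
theorem stmt_19 (c : ℕ) (lam : ℝ) (B D Um Up : Matrix (Fin c) (Fin c) ℝ)
    (hUm : Um * Um - Um * (lam • (1 : Matrix (Fin c) (Fin c) ℝ) - D)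
      + lam • (B - D) = 0)
    (hUp : Up * Up - Up * (lam • (1 : Matrix (Fin c) (Fin c) ℝ) - D)
      + lam • (B - D) = 0)
    (hinv : IsUnit (Up - Um))
    (v w α : Fin c → ℝ)
    (hw : w ᵥ* (lam • (B - D)) = α)
    (F : ℝ → Fin c → ℝ)
    (hF : F = fun x : ℝ =>
      v ᵥ* ((Up - Um)⁻¹ * (NormedSpace.exp (x • Up) - NormedSpace.exp (x • Um)))
        + w ᵥ* ((1 : Matrix (Fin c) (Fin c) ℝ) - NormedSpace.exp (x • Um))) :
    (∀ x : ℝ,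
      deriv (deriv F) x - (deriv F x) ᵥ* (lam • (1 : Matrix (Fin c) (Fin c) ℝ) - D)
        + lam • ((F x) ᵥ* (B - D)) = α) ∧ F 0 = 0 := by
  set S : Matrix (Fin c) (Fin c) ℝ := lam • (1 : Matrix (Fin c) (Fin c) ℝ) - D with hS
  set K : Matrix (Fin c) (Fin c) ℝ := lam • (B - D) with hK
  set M : Matrix (Fin c) (Fin c) ℝ := (Up - Um)⁻¹ with hM
  have eUp : Up * Up = Up * S - K := by
    rw [sub_add, sub_eq_zero] at hUp; exact hUp
  have eUm : Um * Um = Um * S - K := by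
    rw [sub_add, sub_eq_zero] at hUm; exact hUm
  set G : ℝ → Fin c → ℝ := fun x =>
    v ᵥ* (M * (NormedSpace.exp (x • Up) * Up - NormedSpace.exp (x • Um) * Um))
      + w ᵥ* (-(NormedSpace.exp (x • Um) * Um)) with hG
  have hFd : ∀ x : ℝ, HasDerivAt F (G x) x := by
    intro x
    rw [hF]
    have h1 : HasDerivAt (fun t : ℝ =>
        NormedSpace.exp (t • Up) - NormedSpace.exp (t • Um))
        (NormedSpace.exp (x • Up) * Up - NormedSpace.exp (x • Um) * Um) x :=
      (expDeriv Up x).sub (expDeriv Um x)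
    have h2 : HasDerivAt (fun t : ℝ =>
        (1 : Matrix (Fin c) (Fin c) ℝ) - NormedSpace.exp (t • Um))
        (-(NormedSpace.exp (x • Um) * Um)) x :=
      (expDeriv Um x).const_sub _
    have h1' := (vmL v M).hasFDerivAt.comp_hasDerivAt x h1
    have h2' := (vmL w 1).hasFDerivAt.comp_hasDerivAt x h2
    have h3 := h1'.add h2'
    simp only [Function.comp_def, vmL_apply, one_mul] at h3
    exact h3.congr_deriv (by change _ + w ᵥ* (1 * _) = G x; simp only [hG, Matrix.one_mul]; rfl)
  have hGd : ∀ x : ℝ, HasDerivAt G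
      (v ᵥ* (M * (NormedSpace.exp (x • Up) * (Up * Up)
          - NormedSpace.exp (x • Um) * (Um * Um)))
        + w ᵥ* (-(NormedSpace.exp (x • Um) * (Um * Um)))) x := by
    intro x
    have hmul : ∀ (U C : Matrix (Fin c) (Fin c) ℝ) (x : ℝ),
        HasDerivAt (fun t : ℝ => NormedSpace.exp (t • U) * C)
          (NormedSpace.exp (x • U) * U * C) x := fun U C x =>
      (hasDerivAt_exp_smul_const U x).mul_const C
    have h1 : HasDerivAt (fun t : ℝ =>
        NormedSpace.exp (t • Up) * Up - NormedSpace.exp (t • Um) * Um)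
        (NormedSpace.exp (x • Up) * (Up * Up) - NormedSpace.exp (x • Um) * (Um * Um)) x := by
      have := (hmul Up Up x).sub (hmul Um Um x)
      simp only [mul_assoc] at this
      exact this
    have h2 : HasDerivAt (fun t : ℝ => -(NormedSpace.exp (t • Um) * Um))
        (-(NormedSpace.exp (x • Um) * (Um * Um))) x := by
      have := (hmul Um Um x).neg
      simp only [mul_assoc] at this
      exact this
    have h1' := (vmL v M).hasFDerivAt.comp_hasDerivAt x h1
    have h2' := (vmL w 1).hasFDerivAt.comp_hasDerivAt x h2
    have h3 := h1'.add h2'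
    simp only [Function.comp_def, vmL_apply, one_mul] at h3
    exact h3.congr_deriv (by change _ + w ᵥ* (1 * _) = _; simp only [Matrix.one_mul]; rfl)
  have hderivF : deriv F = G := funext fun x => (hFd x).deriv
  constructor
  · intro x
    rw [hderivF, (hGd x).deriv, hF]
    simp only [hG]
    have hsm : ∀ u : Fin c → ℝ, lam • (u ᵥ* (B - D)) = u ᵥ* K := fun u => by
      rw [hK, vecMul_smul_mat]
    rw [hsm, ← hw, eUp, eUm]
    simp only [mul_sub, sub_mul, mul_add, add_mul, mul_one, one_mul, mul_neg, neg_mul,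
      mul_assoc, Matrix.sub_vecMul, Matrix.add_vecMul, Matrix.neg_vecMul,
      Matrix.vecMul_vecMul, Matrix.vecMul_sub, Matrix.vecMul_add, Matrix.vecMul_neg,
      Matrix.vecMul_one]
    abel
  · rw [hF]
    simp [NormedSpace.exp_zero]
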